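/- arXiv:1803.08686 — 2 statements merged into one kernel-verified Lean document; each statement's English description precedes it below -/
import Mathlib

section
/- With σ̃²(ρ) = 1 - (αρ)/(αρ + (ᾱρK + σ_z²/γ(ρ) + 1)/T), where γ(ρ) = 2/(π(Kρ+1)) and σ_z² = 1−2/π, the limit as ρ → ∞ of σ̃²(ρ) equals 1 − αT/(αT + ᾱK + (π/2 − 1)K), exhibiting a strictly positive saturation floor whenever ᾱ > 0 or K > 0. -/
open Real Filter

/-- High-SNR saturation of the quantized SP LMMSE error variance. -/
theorem stmt1 (K T α : ℝ) (hK : 1 ≤ K) (hT : 0 < T) (hα : α ∈ Set.Ioo (0:ℝ) 1) :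
    Tendsto
      (fun ρ : ℝ => 1 - (α * ρ) /
        (α * ρ + ((1 - α) * ρ * K + (1 - 2 / π) / (2 / (π * (K * ρ + 1))) + 1) / T))
      atTop
      (nhds (1 - α * T / (α * T + (1 - α) * K + (π / 2 - 1) * K))) ∧
    0 < 1 - α * T / (α * T + (1 - α) * K + (π / 2 - 1) * K) := by
  obtain ⟨hα0, hα1⟩ := hα
  have hK0 : (0:ℝ) < K := lt_of_lt_of_le one_pos hK
  have hπ : (0:ℝ) < π := Real.pi_pos
  have hπ2 : (1:ℝ) < π / 2 := by
    have := Real.pi_gt_three; linarith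
  set S : ℝ := (1 - α) * K + (π / 2 - 1) * K with hS
  have hS0 : 0 < S := by rw [hS]; nlinarith
  have hden : 0 < α * T + S := by nlinarith
  have hassoc : α * T + S = α * T + (1 - α) * K + (π / 2 - 1) * K := by rw [hS]; ring
  have h1 : α * T / (α * T + S) < 1 := by
    rw [div_lt_one hden]; nlinarith
  constructor
  · have heq : (fun ρ : ℝ => 1 - (α * ρ) /
        (α * ρ + ((1 - α) * ρ * K + (1 - 2 / π) / (2 / (π * (K * ρ + 1))) + 1) / T))
        =ᶠ[atTop] fun ρ : ℝ => 1 - α / (α + (S + (π / 2) / ρ) / T) := by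
      filter_upwards [eventually_gt_atTop (0:ℝ)] with ρ hρ
      have hKρ : (0:ℝ) < K * ρ + 1 := by nlinarith
      have hq : (1 - 2 / π) / (2 / (π * (K * ρ + 1))) = (π / 2 - 1) * (K * ρ + 1) := by
        rw [div_div_eq_mul_div]; field_simp
      have hdpos : 0 < α * ρ + ((1 - α) * ρ * K + (π / 2 - 1) * (K * ρ + 1) + 1) / T := by
        have h2 : 0 < (π / 2 - 1) * (K * ρ + 1) := by nlinarith
        have h3 : 0 < (1 - α) * ρ * K := by
          exact mul_pos (mul_pos (by linarith) hρ) hK0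
        positivity
      have hdpos2 : 0 < α + (S + (π / 2) / ρ) / T := by
        have : 0 < (π/2)/ρ := by positivity
        positivity
      have key : (α * ρ) / (α * ρ + ((1 - α) * ρ * K + (1 - 2 / π) / (2 / (π * (K * ρ + 1))) + 1) / T)
          = α / (α + (S + (π / 2) / ρ) / T) := by
        rw [hq, div_eq_div_iff hdpos.ne' hdpos2.ne', hS]
        field_simp
        ring
      rw [key]
    refine Tendsto.congr' heq.symm ?_
    have hlim : Tendsto (fun ρ : ℝ => α / (α + (S + (π / 2) / ρ) / T)) atTop
        (nhds (α / (α + (S + 0) / T))) := by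
      apply Tendsto.div tendsto_const_nhds
      · exact tendsto_const_nhds.add ((tendsto_const_nhds.add
          (tendsto_const_nhds.div_atTop tendsto_id)).div_const T)
      · have : 0 < α + (S + 0) / T := by positivity
        exact ne_of_gt this
    have hval : α / (α + (S + 0) / T) = α * T / (α * T + (1 - α) * K + (π / 2 - 1) * K) := by
      rw [add_zero, ← hassoc]
      field_simp
    rw [hval] at hlim
    exact hlim.const_sub 1
  · rw [← hassoc]; linarith
end

section
/- Any critical point α* ∈ (0,1) of Υ_UQSP(α) satisfies the quadratic equation obtained from d/dα Υ_UQSP = 0, whose solutions are α* = (δ ± √(δ(Tρ+1)(Kρ+1)T)) / (ρ(K²ρT + K(MρT + ρ − ρT² + T) − T²)), where δ = T(K²ρ² + Kρ(Mρ+2) + 1) + Kρ². -/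
open Real

/-- Any interior critical point of the unquantized effective SNR `Υ_UQSP(α)` is one of the
two closed-form roots of Corollary 2. -/
theorem stmt6 (ρ K T M : ℝ) (hρ : 0 < ρ) (hK : 1 ≤ K) (hT : 0 < T) (hM : 0 < M)
    (αstar : ℝ) (hmem : αstar ∈ Set.Ioo (0:ℝ) 1)
    (hden : ρ * (K^2 * ρ * T + K * (M * ρ * T + ρ - ρ * T^2 + T) - T^2) ≠ 0)
    (hcrit : HasDerivAt
      (fun α : ℝ => α * (1 - α) * ρ^2 * T^2 * M /
        ((1 - α) * ρ^2 * K * T * M + α * ρ * (K * ρ + 1) * T^2 + 2 * α * (1 - α) * ρ^2 * T +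
          (1 - α) * ρ^2 * K^2 * T + (2 - α) * ρ * K * T + T + (1 - α)^2 * ρ^2 * K))
      0 αstar) :
    αstar = (T * (K^2 * ρ^2 + K * ρ * (M * ρ + 2) + 1) + K * ρ^2 +
        Real.sqrt ((T * (K^2 * ρ^2 + K * ρ * (M * ρ + 2) + 1) + K * ρ^2) *
          (T * ρ + 1) * (K * ρ + 1) * T)) /
      (ρ * (K^2 * ρ * T + K * (M * ρ * T + ρ - ρ * T^2 + T) - T^2)) ∨
    αstar = (T * (K^2 * ρ^2 + K * ρ * (M * ρ + 2) + 1) + K * ρ^2 -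
        Real.sqrt ((T * (K^2 * ρ^2 + K * ρ * (M * ρ + 2) + 1) + K * ρ^2) *
          (T * ρ + 1) * (K * ρ + 1) * T)) /
      (ρ * (K^2 * ρ * T + K * (M * ρ * T + ρ - ρ * T^2 + T) - T^2)) := by
  obtain ⟨hα0, hα1⟩ := hmem
  have hK0 : (0:ℝ) < K := lt_of_lt_of_le one_pos hK
  have h1 : (0:ℝ) < 1 - αstar := by linarith
  have h2 : (0:ℝ) < 2 - αstar := by linarith
  have hρ2 : (0:ℝ) < ρ^2 := by positivity
  -- derivative building blocks
  have hid := hasDerivAt_id αstar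
  have h1α : HasDerivAt (fun α : ℝ => 1 - α) (-1) αstar := by
    simpa using (hasDerivAt_id' αstar).const_sub (1:ℝ)
  have h2α : HasDerivAt (fun α : ℝ => 2 - α) (-1) αstar := by
    simpa using (hasDerivAt_id' αstar).const_sub (2:ℝ)
  have hN := (((hid.mul h1α).mul_const (ρ^2)).mul_const (T^2)).mul_const M
  have t1 := (((h1α.mul_const (ρ^2)).mul_const K).mul_const T).mul_const M
  have t2 := ((hid.mul_const ρ).mul_const (K*ρ+1)).mul_const (T^2)
  have t3 := (((HasDerivAt.const_mul (2:ℝ) hid).mul h1α).mul_const (ρ^2)).mul_const T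
  have t4 := ((h1α.mul_const (ρ^2)).mul_const (K^2)).mul_const T
  have t5 := ((h2α.mul_const ρ).mul_const K).mul_const T
  have t6 := hasDerivAt_const αstar T
  have t7 := ((h1α.pow 2).mul_const (ρ^2)).mul_const K
  have hD := (((((t1.add t2).add t3).add t4).add t5).add t6).add t7
  -- denominator value is positive
  have hDpos : 0 < (1 - αstar) * ρ^2 * K * T * M + αstar * ρ * (K * ρ + 1) * T^2 +
      2 * αstar * (1 - αstar) * ρ^2 * T + (1 - αstar) * ρ^2 * K^2 * T +
      (2 - αstar) * ρ * K * T + T + (1 - αstar)^2 * ρ^2 * K := by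
    have p1 : 0 < (1 - αstar) * ρ^2 * K * T * M :=
      mul_pos (mul_pos (mul_pos (mul_pos h1 hρ2) hK0) hT) hM
    have p2 : 0 < αstar * ρ * (K * ρ + 1) * T^2 :=
      mul_pos (mul_pos (mul_pos hα0 hρ) (by positivity)) (by positivity)
    have p3 : 0 < 2 * αstar * (1 - αstar) * ρ^2 * T :=
      mul_pos (mul_pos (mul_pos (by linarith) h1) hρ2) hT
    have p4 : 0 < (1 - αstar) * ρ^2 * K^2 * T :=
      mul_pos (mul_pos (mul_pos h1 hρ2) (by positivity)) hT
    have p5 : 0 < (2 - αstar) * ρ * K * T :=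
      mul_pos (mul_pos (mul_pos h2 hρ) hK0) hT
    have p7 : 0 < (1 - αstar)^2 * ρ^2 * K :=
      mul_pos (mul_pos (by positivity) hρ2) hK0
    linarith
  have hD0 : ((1 - αstar) * ρ^2 * K * T * M + αstar * ρ * (K * ρ + 1) * T^2 +
      2 * αstar * (1 - αstar) * ρ^2 * T + (1 - αstar) * ρ^2 * K^2 * T +
      (2 - αstar) * ρ * K * T + T + (1 - αstar)^2 * ρ^2 * K) ≠ 0 := ne_of_gt hDpos
  have hdiv := hN.div hD hD0
  have hv := hdiv.unique hcrit
  rw [div_eq_zero_iff] at hv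
  have hv' := hv.resolve_right (pow_ne_zero 2 hD0)
  -- quadratic equation: A α² − 2δ α + δ = 0
  have hquad : ρ * (K^2 * ρ * T + K * (M * ρ * T + ρ - ρ * T^2 + T) - T^2) * αstar^2 -
      2 * (T * (K^2 * ρ^2 + K * ρ * (M * ρ + 2) + 1) + K * ρ^2) * αstar +
      (T * (K^2 * ρ^2 + K * ρ * (M * ρ + 2) + 1) + K * ρ^2) = 0 := by
    have hM0 : (ρ^2 * T^2 * M) ≠ 0 := by positivity
    simp only [id_eq, id, Pi.mul_apply, Pi.add_apply, Pi.pow_apply] at hv'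
    have h2 : ρ^2 * T^2 * M *
        (ρ * (K^2 * ρ * T + K * (M * ρ * T + ρ - ρ * T^2 + T) - T^2) * αstar^2 -
          2 * (T * (K^2 * ρ^2 + K * ρ * (M * ρ + 2) + 1) + K * ρ^2) * αstar +
          (T * (K^2 * ρ^2 + K * ρ * (M * ρ + 2) + 1) + K * ρ^2)) = 0 := by
      linear_combination hv'
    exact (mul_eq_zero.mp h2).resolve_left hM0
  set δ := T * (K^2 * ρ^2 + K * ρ * (M * ρ + 2) + 1) + K * ρ^2 with hδ
  set A := ρ * (K^2 * ρ * T + K * (M * ρ * T + ρ - ρ * T^2 + T) - T^2) with hA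
  set s := Real.sqrt (δ * (T * ρ + 1) * (K * ρ + 1) * T) with hsdef
  have hδpos : 0 < δ := by
    have : 0 < K^2 * ρ^2 + K * ρ * (M * ρ + 2) + 1 := by positivity
    nlinarith
  have hs : s^2 = δ * (T * ρ + 1) * (K * ρ + 1) * T := by
    rw [hsdef, sq_sqrt]
    positivity
  have h0 : (A * αstar - (δ + s)) * (A * αstar - (δ - s)) = 0 := by
    linear_combination A * hquad - hs
  rcases mul_eq_zero.mp h0 with h | h
  · left
    rw [eq_div_iff hden]
    linear_combination h
  · right
    rw [eq_div_iff hden]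
    linear_combination h
end
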